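/- Let L ≥ 2, let S be a dense subset of the circle ℝ/Lℤ, and let G be a graph on vertex set S that is geometrically existentially closed and has unit threshold (adjacent vertices are at distance < 1). Then for all u, v ∈ S and every integer k ≥ 2: d(u,v) < k if and only if the graph distance between u and v in G is at most k. -/

import Mathlib

/-- Geometric existential closure for a graph on a subset `S` of the circle. -/
def IsGEC {L : ℝ} {S : Set (AddCircle L)} (G : SimpleGraph S) : Prop :=
  ∀ (s : S) (A B : Finset S), Disjoint A B →
    (∀ a ∈ A, dist (a : AddCircle L) (s : AddCircle L) < 1) →
    (∀ b ∈ B, dist (b : AddCircle L) (s : AddCircle L) < 1) →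
    ∀ ε : ℝ, 0 < ε →
      ∃ v : S, v ∉ A ∧ v ∉ B ∧ (∀ a ∈ A, G.Adj v a) ∧ (∀ b ∈ B, ¬ G.Adj v b) ∧
        dist (v : AddCircle L) (s : AddCircle L) < ε

/-- Adjacent vertices are at circle distance less than 1. -/
def HasUnitThreshold {L : ℝ} {S : Set (AddCircle L)} (G : SimpleGraph S) : Prop :=
  ∀ u v : S, G.Adj u v → dist (u : AddCircle L) (v : AddCircle L) < 1

lemma aux_norm_coe_le_abs (L : ℝ) (a : ℝ) : ‖(a : AddCircle L)‖ ≤ |a| :=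
  by simpa [Real.norm_eq_abs] using QuotientAddGroup.norm_mk_le_norm (S := AddSubgroup.zmultiples L) (m := a)

lemma aux_exists_rep (L : ℝ) (x : AddCircle L) :
    ∃ r : ℝ, (r : AddCircle L) = x ∧ |r| = ‖x‖ := by
  obtain ⟨r0, rfl⟩ := QuotientAddGroup.mk_surjective x
  refine ⟨r0 - round (L⁻¹ * r0) * L, ?_, ?_⟩
  · have h0 : ((round (L⁻¹ * r0) * L : ℝ) : AddCircle L) = 0 := by
      rw [QuotientAddGroup.eq_zero_iff]
      exact ⟨round (L⁻¹ * r0), by simp [zsmul_eq_mul]⟩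
    rw [QuotientAddGroup.mk_sub]
    show _ - _ = _
    rw [h0, sub_zero]
  · rw [AddCircle.norm_eq]

/-- Geodesic property: a point on the way from `x` to `y`. -/
lemma aux_geo {L : ℝ} (x y : AddCircle L) {t : ℝ} (ht0 : 0 ≤ t)
    (ht : t ≤ dist x y) :
    ∃ z : AddCircle L, dist x z ≤ t ∧ dist z y ≤ dist x y - t := by
  obtain ⟨r, hr, hrn⟩ := aux_exists_rep L (y - x)
  have hD : dist x y = |r| := by
    rw [dist_eq_norm, ← norm_neg, neg_sub, ← hrn]
  set s : ℝ := if 0 ≤ r then t else -t with hs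
  refine ⟨x + (s : AddCircle L), ?_, ?_⟩
  · have : dist x (x + (s : AddCircle L)) = ‖(s : AddCircle L)‖ := by
      rw [dist_eq_norm]
      simp
    rw [this]
    refine le_trans (aux_norm_coe_le_abs L s) ?_
    rw [hs]
    split_ifs <;> simp [abs_of_nonneg ht0, abs_of_nonpos (neg_nonpos.mpr ht0), ht0]
  · have h1 : dist (x + (s : AddCircle L)) y = ‖((s - r : ℝ) : AddCircle L)‖ := by
      rw [dist_eq_norm, QuotientAddGroup.mk_sub]
      show _ = ‖(s : AddCircle L) - (r : AddCircle L)‖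
      rw [hr]
      congr 1
      abel
    rw [h1]
    refine le_trans (aux_norm_coe_le_abs L _) ?_
    rw [hD] at ht ⊢
    rw [hs]
    rcases le_or_gt 0 r with h | h
    · rw [if_pos h, abs_of_nonneg h] at *
      rw [abs_of_nonpos (by linarith)]
      linarith
    · rw [if_neg (not_le.mpr h), abs_of_neg h] at *
      rw [abs_of_nonneg (by linarith)]
      linarith

/-- Key step: if the circle distance is `< m` then the graph distance is `≤ m`. -/
lemma aux_step {L : ℝ} {S : Set (AddCircle L)} (hSdense : Dense S)
    {G : SimpleGraph S} (hgec : IsGEC G) (v : S) :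
    ∀ m : ℕ, 2 ≤ m → ∀ w : S, dist (w : AddCircle L) (v : AddCircle L) < m →
      G.edist w v ≤ (m : ℕ∞) := by
  classical
  intro m hm
  induction m, hm using Nat.le_induction with
  | base =>
    intro w hw
    set D := dist (w : AddCircle L) (v : AddCircle L) with hDdef
    have hD0 : 0 ≤ D := dist_nonneg
    obtain ⟨z, hz1, hz2⟩ := aux_geo (w : AddCircle L) (v : AddCircle L)
      (by linarith : (0:ℝ) ≤ D / 2) (by linarith : D / 2 ≤ D)
    have hz2' : dist z (v : AddCircle L) ≤ D / 2 := by
      refine le_trans hz2 (by linarith)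
    have hδ : (0:ℝ) < 1 - D / 2 := by
      push_cast at hw
      linarith
    obtain ⟨s, hsball, hsS⟩ := Metric.dense_iff.mp hSdense z _ hδ
    have hsz : dist s z < 1 - D / 2 := Metric.mem_ball.mp hsball
    obtain ⟨x, hxA, _, hadj, _, _⟩ := hgec ⟨s, hsS⟩ {w, v} ∅
      (Finset.disjoint_empty_right _)
      (by
        intro a ha
        rcases Finset.mem_insert.mp ha with rfl | ha
        · calc dist (a : AddCircle L) s ≤ dist (a : AddCircle L) z + dist z s :=
            dist_triangle _ _ _
          _ < D / 2 + (1 - D / 2) := by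
              rw [dist_comm z s]; exact add_lt_add_of_le_of_lt hz1 hsz
          _ = 1 := by ring
        · rw [Finset.mem_singleton.mp ha]
          calc dist (v : AddCircle L) s ≤ dist (v : AddCircle L) z + dist z s :=
            dist_triangle _ _ _
          _ < D / 2 + (1 - D / 2) := by
              rw [dist_comm (v : AddCircle L) z, dist_comm z s]
              exact add_lt_add_of_le_of_lt hz2' hsz
          _ = 1 := by ring)
      (by simp) 1 one_pos
    have hxw : G.Adj w x := (hadj w (Finset.mem_insert_self _ _)).symm
    have hxv : G.Adj x v := hadj v (Finset.mem_insert_of_mem (Finset.mem_singleton_self _))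
    have := G.edist_le (SimpleGraph.Walk.cons hxw (SimpleGraph.Walk.cons hxv SimpleGraph.Walk.nil))
    simpa using this
  | succ m hm ih =>
    intro w hw
    by_cases hcase : dist (w : AddCircle L) (v : AddCircle L) < m
    · exact le_trans (ih w hcase) (by exact_mod_cast Nat.cast_le.mpr (Nat.le_succ m))
    · push_neg at hcase
      set D := dist (w : AddCircle L) (v : AddCircle L) with hDdef
      have hm1 : (1:ℝ) ≤ (m:ℝ) := by exact_mod_cast Nat.one_le_of_lt hm
      have hDm : (m:ℝ) ≤ D := hcase
      have hDm1 : D < (m:ℝ) + 1 := by push_cast at hw; linarith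
      set t : ℝ := (D - m + 1) / 2 with htdef
      have ht0 : 0 ≤ t := by rw [htdef]; linarith
      have ht1 : t < 1 := by rw [htdef]; linarith
      have htD : t ≤ D := by rw [htdef]; linarith
      obtain ⟨z, hz1, hz2⟩ := aux_geo (w : AddCircle L) (v : AddCircle L) ht0 htD
      have he : (0:ℝ) < (m:ℝ) - (D - t) := by rw [htdef]; linarith
      set δ : ℝ := min (1 - t) ((m:ℝ) - (D - t)) / 3 with hδdef
      have hδ0 : 0 < δ := by
        rw [hδdef]
        have := lt_min (by linarith : (0:ℝ) < 1 - t) he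
        linarith
      have hδ1 : δ < 1 - t := by
        rw [hδdef]
        have h := min_le_left (1 - t) ((m:ℝ) - (D - t))
        linarith
      have hδ2 : 3 * δ ≤ (m:ℝ) - (D - t) := by
        rw [hδdef]
        have h := min_le_right (1 - t) ((m:ℝ) - (D - t))
        linarith
      obtain ⟨s, hsball, hsS⟩ := Metric.dense_iff.mp hSdense z _ hδ0
      have hsz : dist s z < δ := Metric.mem_ball.mp hsball
      obtain ⟨x, _, _, hadj, _, hxs⟩ := hgec ⟨s, hsS⟩ {w} ∅
        (Finset.disjoint_empty_right _)
        (by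
          intro a ha
          rw [Finset.mem_singleton.mp ha]
          calc dist (w : AddCircle L) s ≤ dist (w : AddCircle L) z + dist z s :=
            dist_triangle _ _ _
          _ < t + δ := by rw [dist_comm z s]; exact add_lt_add_of_le_of_lt hz1 hsz
          _ < 1 := by linarith)
        (by simp) δ hδ0
      have hxw : G.Adj w x := (hadj w (Finset.mem_singleton_self _)).symm
      have hxv : dist (x : AddCircle L) (v : AddCircle L) < (m:ℝ) := by
        calc dist (x : AddCircle L) (v : AddCircle L)
            ≤ dist (x : AddCircle L) s + dist s z + dist z (v : AddCircle L) :=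
              dist_triangle4 _ _ _ _
          _ < δ + δ + (D - t) := by
              refine add_lt_add_of_lt_of_le (add_lt_add hxs hsz) hz2
          _ ≤ (m:ℝ) := by linarith
      have h1 : G.edist w x ≤ 1 := by
        have := G.edist_le (SimpleGraph.Walk.cons hxw SimpleGraph.Walk.nil)
        simpa using this
      calc G.edist w v ≤ G.edist w x + G.edist x v := SimpleGraph.edist_triangle
        _ ≤ 1 + (m : ℕ∞) := add_le_add h1 (ih x hxv)
        _ = ((m + 1 : ℕ) : ℕ∞) := by push_cast; rw [add_comm]
        _ ≤ _ := le_refl _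

lemma aux_walk {L : ℝ} {S : Set (AddCircle L)} {G : SimpleGraph S}
    (hut : HasUnitThreshold G) {a b : S} (p : G.Walk a b) :
    dist (a : AddCircle L) (b : AddCircle L) ≤ p.length ∧
      (p.length ≠ 0 → dist (a : AddCircle L) (b : AddCircle L) < p.length) := by
  induction p with
  | nil => simp
  | @cons a c b h p ih =>
    have hac : dist (a : AddCircle L) (c : AddCircle L) < 1 := hut _ _ h
    have htri : dist (a : AddCircle L) (b : AddCircle L) ≤
        dist (a : AddCircle L) (c : AddCircle L) + dist (c : AddCircle L) (b : AddCircle L) :=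
      dist_triangle _ _ _
    have hlen : ((SimpleGraph.Walk.cons h p).length : ℝ) = p.length + 1 := by
      rw [SimpleGraph.Walk.length_cons]; push_cast; ring
    have hlt : dist (a : AddCircle L) (b : AddCircle L) < p.length + 1 := by
      have := ih.1
      linarith
    constructor
    · rw [hlen]; linarith
    · intro _; rw [hlen]; linarith

/-- For a g.e.c. unit-threshold graph on a dense subset of `ℝ/Lℤ` with `L ≥ 2` and `k ≥ 2`:
`d(u,v) < k` iff the graph distance between `u` and `v` is at most `k`. -/
theorem stmt_6 (L : ℝ) (hL : 2 ≤ L) (S : Set (AddCircle L)) (hSdense : Dense S)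
    (G : SimpleGraph S) (hgec : IsGEC G) (hut : HasUnitThreshold G)
    (u v : S) (k : ℕ) (hk : 2 ≤ k) :
    dist (u : AddCircle L) (v : AddCircle L) < (k : ℝ) ↔ G.edist u v ≤ (k : ℕ∞) := by
  constructor
  · intro h
    exact aux_step hSdense hgec v k hk u h
  · intro h
    have hne : G.edist u v ≠ ⊤ := by
      intro htop
      rw [htop] at h
      exact (lt_irrefl _ (lt_of_le_of_lt (le_trans le_top h) (by
        exact_mod_cast WithTop.coe_lt_top k))).elim
    obtain ⟨p, hp⟩ := (SimpleGraph.reachable_of_edist_ne_top hne).exists_walk_length_eq_edist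
    have hplen : p.length ≤ k := by
      rw [← Nat.cast_le (α := ℕ∞), hp]
      exact h
    obtain ⟨h1, h2⟩ := aux_walk hut p
    rcases Nat.eq_zero_or_pos p.length with h0 | h0
    · rw [h0] at h1
      push_cast at h1
      have : (0:ℝ) < k := by exact_mod_cast Nat.lt_of_lt_of_le (by norm_num) hk
      have hd0 : dist (u : AddCircle L) (v : AddCircle L) = 0 :=
        le_antisymm h1 dist_nonneg
      rw [hd0]; exact this
    · have := h2 h0.ne'
      refine lt_of_lt_of_le this ?_
      exact_mod_cast hplen
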